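/- Let $n = mp$ for integers $m \geq 1$, $p \geq 2$, and let $\mathbf{A}$ be an $m\times n$ real matrix that has $p$ non-zero entries in each row and exactly one non-zero entry in each column, where these entries equal $1$ in columns $i \leq m$ and equal $-1/(p-1)$ in columns $i > m$. For any $\mathbf{X} = (X_1,\ldots,X_n)^T \in \mathbb{R}^n$, setting $\widetilde{\mathbf{X}} = \mathbf{A}\mathbf{X}$ and $\overline{X} = \frac{1}{n}\sum_{i=1}^n X_i$, the self-normalized sum of the $\widetilde{X}_i$ satisfies the identity $\frac{\sum_{i=1}^m \widetilde{X}_i}{\sqrt{\sum_{i=1}^m \widetilde{X}_i^2}} = \frac{n}{n-m}\cdot\frac{\sum_{i=1}^m (X_i - \overline{X})}{\sqrt{\mathbf{X}^T\mathbf{A}^T\mathbf{A}\mathbf{X}}}$ (whenever the denominators are nonzero). -/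
import Mathlib


open Finset Matrix

/-- For an empirical centering matrix `A` (an `m × n` matrix,
`n = mp`, with `p` non-zero entries per row, exactly one non-zero entry per
column, the non-zero entries being `1` in columns `i ≤ m` and `-1/(p-1)` in
columns `i > m`) and any `X ∈ ℝⁿ`, the self-normalized sum of `X~ = A X`
satisfies
`(∑ X~_i)/√(∑ X~_i²) = (n/(n-m)) (∑_{i≤m}(X_i - X̄))/√(Xᵀ Aᵀ A X)`,
whenever the denominators are nonzero. -/
theorem selfnormalized_centering_identity
    (m p n : ℕ) (hm : 1 ≤ m) (hp : 2 ≤ p) (hn : n = m * p)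
    (A : Matrix (Fin m) (Fin n) ℝ)
    (hrow : ∀ i, (Finset.univ.filter (fun j => A i j ≠ 0)).card = p)
    (hcol : ∀ j, (Finset.univ.filter (fun i => A i j ≠ 0)).card = 1)
    (hone : ∀ (i : Fin m) (j : Fin n), (j : ℕ) < m → A i j ≠ 0 → A i j = 1)
    (hneg : ∀ (i : Fin m) (j : Fin n), m ≤ (j : ℕ) → A i j ≠ 0 → A i j = -(1 / ((p : ℝ) - 1)))
    (X : Fin n → ℝ)
    (hden1 : ∑ i, (A.mulVec X i) ^ 2 ≠ 0)
    (hden2 : X ⬝ᵥ (Aᵀ * A).mulVec X ≠ 0) :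
    (∑ i, A.mulVec X i) / Real.sqrt (∑ i, (A.mulVec X i) ^ 2) =
      ((n : ℝ) / ((n : ℝ) - m)) *
        ((∑ j ∈ Finset.univ.filter (fun j : Fin n => (j : ℕ) < m),
            (X j - (1 / (n : ℝ)) * ∑ k, X k)) /
          Real.sqrt (X ⬝ᵥ (Aᵀ * A).mulVec X)) := by
  -- the two quadratic denominators coincide
  have hden : X ⬝ᵥ (Aᵀ * A).mulVec X = ∑ i, (A.mulVec X i) ^ 2 := by
    rw [← Matrix.mulVec_mulVec, Matrix.dotProduct_mulVec, Matrix.vecMul_transpose]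
    simp [dotProduct, sq]
  have hp1 : (p : ℝ) - 1 ≠ 0 := by
    have h2 : (2 : ℝ) ≤ (p : ℝ) := by exact_mod_cast hp
    linarith
  have hmn : m ≤ n := by
    subst hn; nlinarith
  -- cardinality of the first block of columns
  have hcard : (Finset.univ.filter fun j : Fin n => (j : ℕ) < m).card = m := by
    have h : (Finset.univ.filter fun j : Fin n => (j : ℕ) < m)
        = Finset.univ.map (Fin.castLEEmb hmn) := by
      ext j
      simp only [Finset.mem_filter, Finset.mem_univ, true_and, Finset.mem_map,
        Fin.castLEEmb_apply]
      constructor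
      · intro hj; exact ⟨⟨j, hj⟩, rfl⟩
      · rintro ⟨i, rfl⟩; exact i.isLt
    rw [h, Finset.card_map, Finset.card_univ, Fintype.card_fin]
  -- column sums of A
  have hcolsum : ∀ j : Fin n, ∑ i, A i j
      = if (j : ℕ) < m then 1 else -(1 / ((p : ℝ) - 1)) := by
    intro j
    obtain ⟨i₀, hi₀⟩ := Finset.card_eq_one.mp (hcol j)
    have hne : A i₀ j ≠ 0 := by
      have : i₀ ∈ Finset.univ.filter fun i => A i j ≠ 0 := by
        rw [hi₀]; exact Finset.mem_singleton_self _
      simpa using this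
    have hsum : ∑ i, A i j = A i₀ j := by
      rw [← Finset.sum_filter_ne_zero Finset.univ, hi₀, Finset.sum_singleton]
    by_cases hj : (j : ℕ) < m
    · rw [hsum, hone i₀ j hj hne, if_pos hj]
    · rw [hsum, hneg i₀ j (le_of_not_gt hj) hne, if_neg hj]
  set a := ∑ j ∈ Finset.univ.filter (fun j : Fin n => (j : ℕ) < m), X j with ha
  set b := ∑ j ∈ Finset.univ.filter (fun j : Fin n => ¬ (j : ℕ) < m), X j with hb
  have hS : ∑ k, X k = a + b := (Finset.sum_filter_add_sum_filter_not _ _ _).symm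
  -- the numerator on the left
  have hnum : ∑ i, A.mulVec X i = a - (1 / ((p : ℝ) - 1)) * b := by
    have h1 : ∑ i, A.mulVec X i = ∑ j, (∑ i, A i j) * X j := by
      simp only [Matrix.mulVec, dotProduct, Finset.sum_mul]
      exact Finset.sum_comm
    rw [h1]
    rw [← Finset.sum_filter_add_sum_filter_not Finset.univ (fun j : Fin n => (j : ℕ) < m)]
    have h2 : ∀ j ∈ Finset.univ.filter (fun j : Fin n => (j : ℕ) < m),
        (∑ i, A i j) * X j = X j := by
      intro j hj
      rw [hcolsum j, if_pos (Finset.mem_filter.mp hj).2, one_mul]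
    have h3 : ∀ j ∈ Finset.univ.filter (fun j : Fin n => ¬ (j : ℕ) < m),
        (∑ i, A i j) * X j = -(1 / ((p : ℝ) - 1)) * X j := by
      intro j hj
      rw [hcolsum j, if_neg (Finset.mem_filter.mp hj).2]
    rw [Finset.sum_congr rfl h2, Finset.sum_congr rfl h3, ← Finset.mul_sum, ← ha, ← hb]
    ring
  -- numerator on the right
  have hnum2 : ∑ j ∈ Finset.univ.filter (fun j : Fin n => (j : ℕ) < m),
      (X j - (1 / (n : ℝ)) * ∑ k, X k) = a - m * ((1 / (n : ℝ)) * (a + b)) := by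
    rw [Finset.sum_sub_distrib, Finset.sum_const, hcard, ← ha, hS, nsmul_eq_mul]
  -- positivity facts for the denominators
  have hsq : Real.sqrt (∑ i, (A.mulVec X i) ^ 2) ≠ 0 := by
    refine Real.sqrt_ne_zero'.mpr ?_
    exact lt_of_le_of_ne (Finset.sum_nonneg fun i _ => sq_nonneg (A.mulVec X i))
      (Ne.symm hden1)
  rw [hden, hnum, hnum2, ← mul_div_assoc]
  congr 1
  -- pure algebra
  have hnR : (n : ℝ) = m * p := by exact_mod_cast hn
  have hm0 : (m : ℝ) ≠ 0 := by positivity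
  have hn0 : (n : ℝ) ≠ 0 := by
    rw [hnR]; positivity
  have hnm : (n : ℝ) - m ≠ 0 := by
    rw [hnR]
    have : (m : ℝ) * p - m = m * ((p : ℝ) - 1) := by ring
    rw [this]
    exact mul_ne_zero hm0 hp1
  rw [hnR]
  have hmp : (m : ℝ) * p ≠ 0 := by positivity
  have hmpm : (m : ℝ) * p - m ≠ 0 := by
    have h : (m : ℝ) * p - m = m * ((p : ℝ) - 1) := by ring
    rw [h]; exact mul_ne_zero hm0 hp1
  field_simp
  ring
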